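/- For N ∈ ℕ and m = (m₁,…,m_N) ∈ ℕ₀^N, the number of partitions of n into distinct positive parts having exactly m_j parts congruent to j mod N for each 1 ≤ j ≤ N has generating function Σ_{n≥0} d_m(n) qⁿ = q^{N·H(m)} / ∏_{j=1}^N (q^N; q^N)_{m_j}, where H(m) = (1/2)mᵀm + Σ_j (j/N - 1/2)m_j and (a;q)_k = ∏_{i=0}^{k-1}(1 - a q^i). -/

import Mathlib

open PowerSeries

/-- The natural number `N·H(m) = ∑_j (N·m_j(m_j-1)/2 + (j+1)·m_j)` for `m ∈ ℕ₀^N`, where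
`H(m) = (1/2)mᵀm + ∑_j ((j+1)/N - 1/2)m_j` (the index j+1 runs through 1,…,N). -/
def NHnat (N : ℕ) (m : Fin N → ℕ) : ℕ :=
  ∑ j : Fin N, (N * (m j * (m j - 1) / 2) + ((j : ℕ) + 1) * m j)

/-- `dctN N m n` is the number of partitions of `n` into distinct positive parts having
exactly `m j` parts congruent to `j+1` mod `N`, for each `j`. -/
noncomputable def dctN (N : ℕ) (m : Fin N → ℕ) (n : ℕ) : ℕ :=
  Nat.card {p : n.Partition // p.parts.Nodup ∧
    ∀ j : Fin N, (p.parts.filter (fun p => p % N = ((j : ℕ) + 1) % N)).card = m j}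

namespace GFAux

open Finset


variable {N : ℕ}

lemma resid_le (hN : 0 < N) (j : Fin N) {c : ℕ} (hc : 0 < c)
    (h : c % N = ((j : ℕ) + 1) % N) : (j : ℕ) + 1 ≤ c := by
  by_contra hlt
  push_neg at hlt
  have hj : (j : ℕ) + 1 ≤ N := j.isLt
  have hcN : c < N := lt_of_lt_of_le hlt hj
  rw [Nat.mod_eq_of_lt hcN] at h
  rcases eq_or_lt_of_le hj with hje | hje
  · rw [hje, Nat.mod_self] at h; omega
  · rw [Nat.mod_eq_of_lt hje] at h; omega

lemma resid_add_le (hN : 0 < N) (j : Fin N) {c : ℕ} (hc : 0 < c)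
    (h : c % N = ((j : ℕ) + 1) % N) (hne : c ≠ (j : ℕ) + 1) : (j : ℕ) + 1 + N ≤ c := by
  have h1 := resid_le hN j hc h
  have h2 : (c - ((j : ℕ) + 1)) % N = 0 := Nat.sub_mod_eq_zero_of_mod_eq h
  obtain ⟨k, hk⟩ := Nat.dvd_of_mod_eq_zero h2
  have hk0 : k ≠ 0 := by rintro rfl; omega
  have : N ≤ N * k := Nat.le_mul_of_pos_right _ (Nat.pos_of_ne_zero hk0)
  omega

lemma resid_inj (hN : 0 < N) {j j' : Fin N}
    (h : ((j : ℕ) + 1) % N = ((j' : ℕ) + 1) % N) : j = j' := by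
  have e : ∀ i : Fin N, ((i : ℕ) + 1) % N = if (i : ℕ) + 1 = N then 0 else (i : ℕ) + 1 := by
    intro i
    split_ifs with hi
    · rw [hi, Nat.mod_self]
    · exact Nat.mod_eq_of_lt (lt_of_le_of_ne i.isLt hi)
  rw [e j, e j'] at h
  have hj : (j : ℕ) + 1 ≤ N := j.isLt
  have hj' : (j' : ℕ) + 1 ≤ N := j'.isLt
  apply Fin.ext
  split_ifs at h <;> omega

/-- add `N` to members of class `j`. -/
def fAdd (N : ℕ) (j : Fin N) (c : ℕ) : ℕ := if c % N = ((j : ℕ) + 1) % N then c + N else c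

/-- subtract `N` from members of class `j`. -/
def fSub (N : ℕ) (j : Fin N) (c : ℕ) : ℕ := if c % N = ((j : ℕ) + 1) % N then c - N else c

lemma fAdd_mod (j : Fin N) (c : ℕ) : fAdd N j c % N = c % N := by
  unfold fAdd; split_ifs <;> simp [Nat.add_mod_right]

lemma fSub_mod (j : Fin N) {c : ℕ} (hc : N ≤ c) : fSub N j c % N = c % N := by
  unfold fSub; split_ifs with h
  · conv_rhs => rw [show c = c - N + N by omega]
    rw [Nat.add_mod_right]
  · rfl

lemma fAdd_inj (j : Fin N) : Function.Injective (fAdd N j) := by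
  intro c₁ c₂ h
  unfold fAdd at h
  split_ifs at h with h1 h2 h2 <;> try omega
  · exfalso; apply h2; rw [← h1, ← h]; simp [Nat.add_mod_right]
  · exfalso; apply h1; rw [← h2, h]; simp [Nat.add_mod_right]

lemma fSub_fAdd (j : Fin N) (c : ℕ) : fSub N j (fAdd N j c) = c := by
  by_cases h : c % N = ((j : ℕ) + 1) % N
  · simp [fAdd, fSub, h, Nat.add_mod_right]
  · simp [fAdd, fSub, h]

lemma sub_add_mod (j : Fin N) {c : ℕ} (hc : N ≤ c) : (c - N) % N = c % N := by
  conv_rhs => rw [show c = c - N + N by omega]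
  rw [Nat.add_mod_right]

lemma fAdd_fSub (j : Fin N) {c : ℕ} (hc : c % N = ((j : ℕ) + 1) % N → N ≤ c) :
    fAdd N j (fSub N j c) = c := by
  by_cases h : c % N = ((j : ℕ) + 1) % N
  · have h2 : (c - N) % N = c % N := sub_add_mod j (hc h)
    simp [fAdd, fSub, h, h2]
    omega
  · simp [fAdd, fSub, h]


section Multisets

variable (j : Fin N)

lemma sum_map_fAdd (s : Multiset ℕ) :
    (s.map (fAdd N j)).sum
      = s.sum + N * (s.filter (fun c => c % N = ((j : ℕ) + 1) % N)).card := by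
  induction s using Multiset.induction with
  | empty => simp
  | cons a t ih =>
    rw [Multiset.map_cons, Multiset.sum_cons, Multiset.sum_cons, Multiset.filter_cons, ih]
    by_cases h : a % N = ((j : ℕ) + 1) % N <;> simp [fAdd, h] <;> ring

lemma filter_map_modpres (f : ℕ → ℕ) (Q : ℕ → Prop) [DecidablePred Q]
    (hQ : ∀ c₁ c₂ : ℕ, c₁ % N = c₂ % N → (Q c₁ ↔ Q c₂)) (s : Multiset ℕ)
    (hf : ∀ c ∈ s, f c % N = c % N) :
    (s.map f).filter Q = (s.filter Q).map f := by
  rw [Multiset.filter_map]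
  congr 1
  apply Multiset.filter_congr
  intro c hc
  exact hQ (f c) c (hf c hc)

lemma map_fAdd_counts (j' : Fin N) (s : Multiset ℕ) :
    ((s.map (fAdd N j)).filter (fun c => c % N = ((j' : ℕ) + 1) % N)).card
      = (s.filter (fun c => c % N = ((j' : ℕ) + 1) % N)).card := by
  rw [filter_map_modpres (fAdd N j) _ (fun c₁ c₂ h => by rw [h]) s (fun c _ => fAdd_mod j c),
    Multiset.card_map]

lemma map_fSub_mod (s : Multiset ℕ)
    (hs : ∀ c ∈ s, c % N = ((j : ℕ) + 1) % N → N ≤ c) :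
    ∀ c ∈ s, fSub N j c % N = c % N := by
  intro c hc
  unfold fSub
  split_ifs with h
  · exact sub_add_mod j (hs c hc h)
  · rfl

lemma map_fSub_counts (j' : Fin N) (s : Multiset ℕ)
    (hs : ∀ c ∈ s, c % N = ((j : ℕ) + 1) % N → N ≤ c) :
    ((s.map (fSub N j)).filter (fun c => c % N = ((j' : ℕ) + 1) % N)).card
      = (s.filter (fun c => c % N = ((j' : ℕ) + 1) % N)).card := by
  rw [filter_map_modpres (fSub N j) _ (fun c₁ c₂ h => by rw [h]) s (map_fSub_mod j s hs),
    Multiset.card_map]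

lemma not_mem_map_fAdd (s : Multiset ℕ) (hpos : ∀ c ∈ s, 0 < c) :
    ((j : ℕ) + 1) ∉ s.map (fAdd N j) := by
  intro hmem
  obtain ⟨c, hc, hfc⟩ := Multiset.mem_map.mp hmem
  have hcpos := hpos c hc
  have hj : (j : ℕ) + 1 ≤ N := j.isLt
  unfold fAdd at hfc
  split_ifs at hfc with h
  · omega
  · exact h (by rw [hfc])

lemma map_fSub_nodup (s : Multiset ℕ) (hnd : s.Nodup)
    (hs : ∀ c ∈ s, c % N = ((j : ℕ) + 1) % N → N ≤ c) :
    (s.map (fSub N j)).Nodup := by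
  refine Multiset.Nodup.map_on ?_ hnd
  intro c₁ h1 c₂ h2 heq
  by_cases hc1 : c₁ % N = ((j : ℕ) + 1) % N <;>
    by_cases hc2 : c₂ % N = ((j : ℕ) + 1) % N <;>
      simp only [fSub, if_pos, if_neg, hc1, hc2, if_true, if_false] at heq
  · have := hs c₁ h1 hc1; have := hs c₂ h2 hc2; omega
  · exfalso
    apply hc2
    rw [← heq, sub_add_mod j (hs c₁ h1 hc1), hc1]
  · exfalso
    apply hc1
    rw [heq, sub_add_mod j (hs c₂ h2 hc2), hc2]
  · exact heq

lemma map_fAdd_fSub (s : Multiset ℕ)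
    (hs : ∀ c ∈ s, c % N = ((j : ℕ) + 1) % N → N ≤ c) :
    (s.map (fSub N j)).map (fAdd N j) = s := by
  rw [Multiset.map_map]
  exact (Multiset.map_congr rfl fun c hc => fAdd_fSub j (hs c hc)).trans (Multiset.map_id _)

lemma map_fSub_fAdd (s : Multiset ℕ) :
    (s.map (fAdd N j)).map (fSub N j) = s := by
  rw [Multiset.map_map]
  exact (Multiset.map_congr rfl fun c hc => fSub_fAdd j c).trans (Multiset.map_id _)

lemma map_fSub_sum (s : Multiset ℕ)
    (hs : ∀ c ∈ s, c % N = ((j : ℕ) + 1) % N → N ≤ c) :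
    (s.map (fSub N j)).sum
      + N * (s.filter (fun c => c % N = ((j : ℕ) + 1) % N)).card = s.sum := by
  have h1 : (s.map (fSub N j)).map (fAdd N j) = s := map_fAdd_fSub j s hs
  have h2 := sum_map_fAdd j (s.map (fSub N j))
  rw [h1, map_fSub_counts j j s hs] at h2
  exact h2.symm

end Multisets


section Equivs

/-- The predicate from `dctN`. -/
def Pred (N : ℕ) (m : Fin N → ℕ) {n : ℕ} (p : n.Partition) : Prop :=
  p.parts.Nodup ∧
    ∀ j : Fin N, (p.parts.filter (fun p => p % N = ((j : ℕ) + 1) % N)).card = m j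

lemma cls_ge_of_pred (hN : 0 < N) (m : Fin N → ℕ) (j : Fin N) {n : ℕ} {p : n.Partition} (hp : Pred N m p) {c : ℕ}
    (hc : c ∈ p.parts) (hcls : c % N = ((j : ℕ) + 1) % N)
    (hne : ((j : ℕ) + 1) ∉ p.parts) : (j : ℕ) + 1 + N ≤ c := by
  refine resid_add_le hN j (p.parts_pos hc) hcls ?_
  rintro rfl
  exact hne hc

def equiv1 (hN : 0 < N) (m : Fin N → ℕ) (j : Fin N) (n : ℕ) (ha : N * m j ≤ n) :
    {q : (n - N * m j).Partition // Pred N m q} ≃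
      {p : n.Partition // Pred N m p ∧ ((j : ℕ) + 1) ∉ p.parts} where
  toFun q :=
    ⟨⟨q.1.parts.map (fAdd N j),
      fun {c} hc => by
        obtain ⟨d, hd, rfl⟩ := Multiset.mem_map.mp hc
        have := q.1.parts_pos hd
        unfold fAdd; split_ifs <;> omega,
      by
        rw [sum_map_fAdd, q.2.2 j, q.1.parts_sum]
        exact Nat.sub_add_cancel ha⟩,
      ⟨q.2.1.map (fAdd_inj j), fun j' => by
        rw [map_fAdd_counts]; exact q.2.2 j'⟩,
      not_mem_map_fAdd j _ (fun c hc => q.1.parts_pos hc)⟩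
  invFun p :=
    have hs : ∀ c ∈ p.1.parts, c % N = ((j : ℕ) + 1) % N → N ≤ c := fun c hc hcls => by
      have := cls_ge_of_pred hN m j p.2.1 hc hcls p.2.2
      omega
    ⟨⟨p.1.parts.map (fSub N j),
      fun {c} hc => by
        obtain ⟨d, hd, rfl⟩ := Multiset.mem_map.mp hc
        have h1 := p.1.parts_pos hd
        unfold fSub
        split_ifs with h
        · have := cls_ge_of_pred hN m j p.2.1 hd h p.2.2
          omega
        · exact h1,
      by
        have h := map_fSub_sum j p.1.parts hs
        rw [p.2.1.2 j, p.1.parts_sum] at h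
        exact Nat.eq_sub_of_add_eq h⟩,
      map_fSub_nodup j _ p.2.1.1 hs, fun j' => by
        rw [map_fSub_counts j j' _ hs]; exact p.2.1.2 j'⟩
  left_inv q := Subtype.ext (Nat.Partition.ext (map_fSub_fAdd j q.1.parts))
  right_inv p := by
    have hs : ∀ c ∈ p.1.parts, c % N = ((j : ℕ) + 1) % N → N ≤ c := fun c hc hcls => by
      have := cls_ge_of_pred hN m j p.2.1 hc hcls p.2.2
      omega
    exact Subtype.ext (Nat.Partition.ext (map_fAdd_fSub j p.1.parts hs))

lemma empty1 (hN : 0 < N) (m : Fin N → ℕ) (j : Fin N) (n : ℕ) (ha : n < N * m j) :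
    IsEmpty {p : n.Partition // Pred N m p ∧ ((j : ℕ) + 1) ∉ p.parts} := by
  constructor
  rintro ⟨p, hp, hmem⟩
  set t := p.parts.filter (fun c => c % N = ((j : ℕ) + 1) % N) with ht
  have hcard : Multiset.card t = m j := hp.2 j
  have hbound : ∀ c ∈ t, N + 1 ≤ c := by
    intro c hc
    rw [ht, Multiset.mem_filter] at hc
    have := cls_ge_of_pred hN m j hp hc.1 hc.2 hmem
    omega
  have h1 : Multiset.card t • (N + 1) ≤ t.sum := Multiset.card_nsmul_le_sum hbound
  have h2 : t.sum ≤ p.parts.sum := by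
    obtain ⟨u, hu⟩ := Multiset.le_iff_exists_add.mp (Multiset.filter_le
      (fun c => c % N = ((j : ℕ) + 1) % N) p.parts)
    rw [← ht] at hu
    rw [hu, Multiset.sum_add]
    exact Nat.le_add_right _ _
  rw [p.parts_sum, hcard] at *
  have h3 : N * m j ≤ m j * (N + 1) := by
    rw [mul_comm]
    exact Nat.mul_le_mul_left _ (Nat.le_succ N)
  rw [smul_eq_mul] at h1
  omega


def equiv2 (hN : 0 < N) (m : Fin N → ℕ) (j : Fin N) (n : ℕ) (hm : m j ≠ 0)
    (hb : (j : ℕ) + 1 + N * (m j - 1) ≤ n) :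
    {q : (n - ((j : ℕ) + 1 + N * (m j - 1))).Partition //
        Pred N (Function.update m j (m j - 1)) q} ≃
      {p : n.Partition // Pred N m p ∧ ((j : ℕ) + 1) ∈ p.parts} where
  toFun q :=
    ⟨⟨((j : ℕ) + 1) ::ₘ q.1.parts.map (fAdd N j),
      fun {c} hc => by
        rcases Multiset.mem_cons.mp hc with rfl | hc
        · omega
        · obtain ⟨d, hd, rfl⟩ := Multiset.mem_map.mp hc
          have := q.1.parts_pos hd
          unfold fAdd; split_ifs <;> omega,
      by
        rw [Multiset.sum_cons, sum_map_fAdd, q.2.2 j, q.1.parts_sum, Function.update_self]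
        omega⟩,
      ⟨Multiset.nodup_cons.mpr
        ⟨not_mem_map_fAdd j _ (fun c hc => q.1.parts_pos hc), q.2.1.map (fAdd_inj j)⟩,
       fun j' => by
        rw [Multiset.filter_cons, Multiset.card_add, map_fAdd_counts, q.2.2 j']
        by_cases hj' : j' = j
        · subst hj'
          rw [if_pos rfl, Function.update_self]
          simp
          omega
        · rw [if_neg (fun h => hj' (resid_inj hN h).symm), Function.update_of_ne hj']
          simp⟩,
      Multiset.mem_cons_self _ _⟩
  invFun p := by
    have hnd := p.2.1.1
    have hmem := p.2.2
    have ht : p.1.parts = ((j : ℕ) + 1) ::ₘ p.1.parts.erase ((j : ℕ) + 1) :=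
      (Multiset.cons_erase hmem).symm
    set t := p.1.parts.erase ((j : ℕ) + 1) with htdef
    have htmem : ∀ c ∈ t, c ≠ (j : ℕ) + 1 ∧ c ∈ p.1.parts := fun c hc =>
      (hnd.mem_erase_iff.mp hc)
    have hs : ∀ c ∈ t, c % N = ((j : ℕ) + 1) % N → (j : ℕ) + 1 + N ≤ c := fun c hc hcls =>
      resid_add_le hN j (p.1.parts_pos (htmem c hc).2) hcls (htmem c hc).1
    have hs' : ∀ c ∈ t, c % N = ((j : ℕ) + 1) % N → N ≤ c := fun c hc hcls => by
      have := hs c hc hcls; omega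
    have hcnt : ∀ j' : Fin N,
        (t.filter (fun c => c % N = ((j' : ℕ) + 1) % N)).card
          = Function.update m j (m j - 1) j' := by
      intro j'
      have h0 := p.2.1.2 j'
      rw [ht, Multiset.filter_cons, Multiset.card_add] at h0
      by_cases hj' : j' = j
      · subst hj'
        rw [Function.update_self]
        simp at h0
        omega
      · rw [if_neg (fun h => hj' (resid_inj hN h).symm)] at h0
        rw [Function.update_of_ne hj']
        simpa using h0
    have htsum : t.sum = n - ((j : ℕ) + 1) := by
      have := p.1.parts_sum
      rw [ht, Multiset.sum_cons] at this
      omega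
    refine ⟨⟨t.map (fSub N j),
      fun {c} hc => by
        obtain ⟨d, hd, rfl⟩ := Multiset.mem_map.mp hc
        have h1 := p.1.parts_pos (htmem d hd).2
        unfold fSub
        split_ifs with h
        · have := hs d hd h
          omega
        · exact h1,
      ?_⟩,
      map_fSub_nodup j _ (hnd.erase _) hs', fun j' => by
        rw [map_fSub_counts j j' _ hs']
        exact hcnt j'⟩
    have h := map_fSub_sum j t hs'
    rw [htsum, hcnt j, Function.update_self] at h
    omega
  left_inv q := by
    apply Subtype.ext
    apply Nat.Partition.ext
    show ((((j : ℕ) + 1) ::ₘ q.1.parts.map (fAdd N j)).erase ((j : ℕ) + 1)).map (fSub N j)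
      = q.1.parts
    rw [Multiset.erase_cons_head, map_fSub_fAdd]
  right_inv p := by
    apply Subtype.ext
    apply Nat.Partition.ext
    have hnd := p.2.1.1
    have hmem := p.2.2
    have htmem : ∀ c ∈ p.1.parts.erase ((j : ℕ) + 1), c ≠ (j : ℕ) + 1 ∧ c ∈ p.1.parts :=
      fun c hc => (hnd.mem_erase_iff.mp hc)
    have hs' : ∀ c ∈ p.1.parts.erase ((j : ℕ) + 1),
        c % N = ((j : ℕ) + 1) % N → N ≤ c := fun c hc hcls => by
      have := resid_add_le hN j (p.1.parts_pos (htmem c hc).2) hcls (htmem c hc).1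
      omega
    show ((j : ℕ) + 1) ::ₘ ((p.1.parts.erase ((j : ℕ) + 1)).map (fSub N j)).map (fAdd N j)
      = p.1.parts
    rw [map_fAdd_fSub j _ hs', Multiset.cons_erase hmem]

lemma empty2 (hN : 0 < N) (m : Fin N → ℕ) (j : Fin N) (n : ℕ) (hm : m j ≠ 0)
    (hb : n < (j : ℕ) + 1 + N * (m j - 1)) :
    IsEmpty {p : n.Partition // Pred N m p ∧ ((j : ℕ) + 1) ∈ p.parts} := by
  constructor
  rintro ⟨p, hp, hmem⟩
  set t := p.parts.filter (fun c => c % N = ((j : ℕ) + 1) % N) with ht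
  have hcard : Multiset.card t = m j := hp.2 j
  have hmemt : ((j : ℕ) + 1) ∈ t := by
    rw [ht, Multiset.mem_filter]
    exact ⟨hmem, rfl⟩
  have hndt : t.Nodup := hp.1.filter _
  set u := t.erase ((j : ℕ) + 1) with hu
  have hucard : Multiset.card u = m j - 1 := by
    rw [hu, Multiset.card_erase_of_mem hmemt, hcard]
    rfl
  have hbound : ∀ c ∈ u, N + 1 ≤ c := by
    intro c hc
    obtain ⟨hne, hct⟩ := hndt.mem_erase_iff.mp hc
    rw [ht, Multiset.mem_filter] at hct
    have := resid_add_le hN j (p.parts_pos hct.1) hct.2 hne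
    omega
  have h1 : Multiset.card u • (N + 1) ≤ u.sum := Multiset.card_nsmul_le_sum hbound
  have htsum : t.sum = ((j : ℕ) + 1) + u.sum := by
    conv_lhs => rw [show t = ((j : ℕ) + 1) ::ₘ u from (Multiset.cons_erase hmemt).symm]
    rw [Multiset.sum_cons]
  have h2 : t.sum ≤ p.parts.sum := by
    obtain ⟨v, hv⟩ := Multiset.le_iff_exists_add.mp (Multiset.filter_le
      (fun c => c % N = ((j : ℕ) + 1) % N) p.parts)
    rw [← ht] at hv
    rw [hv, Multiset.sum_add]
    exact Nat.le_add_right _ _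
  rw [p.parts_sum] at h2
  rw [hucard, smul_eq_mul] at h1
  have h3 : N * (m j - 1) ≤ (m j - 1) * (N + 1) := by
    rw [mul_comm]
    exact Nat.mul_le_mul_left _ (Nat.le_succ N)
  omega

end Equivs


section Counting

lemma card_split {α : Type*} [Fintype α] (P Q : α → Prop) :
    Nat.card {x // P x} = Nat.card {x // P x ∧ Q x} + Nat.card {x // P x ∧ ¬ Q x} := by
  classical
  rw [Nat.card_eq_fintype_card, Nat.card_eq_fintype_card, Nat.card_eq_fintype_card,
    Fintype.card_subtype, Fintype.card_subtype, Fintype.card_subtype,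
    ← Finset.card_filter_add_card_filter_not (s := Finset.univ.filter P) (p := Q)]
  congr 1 <;> rw [Finset.filter_filter]

lemma dctN_eq_card (m : Fin N → ℕ) (n : ℕ) :
    dctN N m n = Nat.card {p : n.Partition // Pred N m p} := rfl

lemma dctN_rec (hN : 0 < N) (m : Fin N → ℕ) (j : Fin N) (hm : m j ≠ 0) (n : ℕ) :
    dctN N m n = (if N * m j ≤ n then dctN N m (n - N * m j) else 0)
      + (if (j : ℕ) + 1 + N * (m j - 1) ≤ n
          then dctN N (Function.update m j (m j - 1)) (n - ((j : ℕ) + 1 + N * (m j - 1)))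
          else 0) := by
  rw [dctN_eq_card,
    card_split (fun p : n.Partition => Pred N m p) (fun p => ((j : ℕ) + 1) ∉ p.parts)]
  have hswap : Nat.card {p : n.Partition // Pred N m p ∧ ¬ ((j : ℕ) + 1) ∉ p.parts}
      = Nat.card {p : n.Partition // Pred N m p ∧ ((j : ℕ) + 1) ∈ p.parts} :=
    Nat.card_congr (Equiv.subtypeEquivRight (fun p => by tauto))
  rw [hswap]
  congr 1
  · split_ifs with ha
    · rw [dctN_eq_card]
      exact (Nat.card_congr (equiv1 hN m j n ha)).symm
    · exact @Nat.card_of_isEmpty _ (empty1 hN m j n (by omega))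
  · split_ifs with hb
    · rw [dctN_eq_card]
      exact (Nat.card_congr (equiv2 hN m j n hm hb)).symm
    · exact @Nat.card_of_isEmpty _ (empty2 hN m j n hm (by omega))

lemma parts_eq_zero (p : (0 : ℕ).Partition) : p.parts = 0 := by
  apply Multiset.eq_zero_of_forall_notMem
  intro c hc
  have h1 := p.parts_pos hc
  have h2 : c ≤ p.parts.sum := Multiset.single_le_sum (fun _ _ => Nat.zero_le _) c hc
  rw [p.parts_sum] at h2
  omega

lemma dctN_base (hN : 0 < N) (m : Fin N → ℕ) (hm : ∀ j, m j = 0) (n : ℕ) :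
    dctN N m n = if n = 0 then 1 else 0 := by
  split_ifs with h
  · subst h
    rw [dctN_eq_card, Nat.card_eq_one_iff_unique]
    constructor
    · constructor
      intro a b
      apply Subtype.ext
      apply Nat.Partition.ext
      rw [parts_eq_zero a.1, parts_eq_zero b.1]
    · refine ⟨⟨default, ?_, fun j => ?_⟩⟩
      · rw [parts_eq_zero]; exact Multiset.nodup_zero
      · rw [parts_eq_zero, Multiset.filter_zero, Multiset.card_zero, hm j]
  · rw [dctN_eq_card]
    refine @Nat.card_of_isEmpty _ ?_
    constructor
    rintro ⟨p, hnd, hcnt⟩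
    have hne : p.parts ≠ 0 := by
      intro h0
      apply h
      rw [← p.parts_sum, h0, Multiset.sum_zero]
    obtain ⟨c, hc⟩ := Multiset.exists_mem_of_ne_zero hne
    have hcpos := p.parts_pos hc
    set j : Fin N := ⟨(c + (N - 1)) % N, Nat.mod_lt _ hN⟩ with hj
    have hcls : c % N = ((j : ℕ) + 1) % N := by
      show c % N = ((c + (N - 1)) % N + 1) % N
      rw [Nat.mod_add_mod, show c + (N - 1) + 1 = c + N by omega, Nat.add_mod_right]
    have hmemf : c ∈ p.parts.filter (fun c => c % N = ((j : ℕ) + 1) % N) :=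
      Multiset.mem_filter.mpr ⟨hc, hcls⟩
    have h0 := hcnt j
    rw [hm j, Multiset.card_eq_zero] at h0
    rw [h0] at hmemf
    exact Multiset.notMem_zero _ hmemf

end Counting


section Arith

lemma tri (t : ℕ) : (t + 1) * t / 2 = t * (t - 1) / 2 + t := by
  rcases t with _ | s
  · simp
  · have h1 : (s + 1 + 1) * (s + 1) = s * (s + 1) + 2 * (s + 1) := by ring
    obtain ⟨v, hv⟩ := Nat.even_mul_succ_self s
    have h2 : (s + 1) * s = s * (s + 1) := mul_comm _ _
    rw [h1, Nat.add_sub_cancel, h2]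
    omega

lemma NHnat_update (m : Fin N → ℕ) (j : Fin N) (hm : m j ≠ 0) :
    NHnat N m = NHnat N (Function.update m j (m j - 1)) + ((j : ℕ) + 1 + N * (m j - 1)) := by
  unfold NHnat
  rw [← Finset.add_sum_erase _ _ (Finset.mem_univ j), ← Finset.add_sum_erase _ _ (Finset.mem_univ j)]
  have hoff : ∀ x ∈ Finset.univ.erase j,
      N * (Function.update m j (m j - 1) x * (Function.update m j (m j - 1) x - 1) / 2)
        + ((x : ℕ) + 1) * Function.update m j (m j - 1) x
      = N * (m x * (m x - 1) / 2) + ((x : ℕ) + 1) * m x := by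
    intro x hx
    rw [Function.update_of_ne (Finset.ne_of_mem_erase hx)]
  rw [Finset.sum_congr rfl hoff, Function.update_self]
  obtain ⟨t, ht⟩ : ∃ t, m j = t + 1 := ⟨m j - 1, by omega⟩
  rw [ht, Nat.add_sub_cancel, tri]
  ring_nf

end Arith

section PS

lemma constCoeff_prod (hN : 0 < N) (m : Fin N → ℕ) :
    constantCoeff (R := ℚ) (∏ j : Fin N, ∏ i ∈ Finset.range (m j),
      (1 - (X : PowerSeries ℚ) ^ (N * (i + 1)))) = 1 := by
  rw [map_prod]
  apply Finset.prod_eq_one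
  intro j _
  rw [map_prod]
  apply Finset.prod_eq_one
  intro i _
  have h : N * (i + 1) ≠ 0 := by positivity
  rw [map_sub, map_one, map_pow, constantCoeff_X, zero_pow h, sub_zero]

lemma prod_update (m : Fin N → ℕ) (j : Fin N) (hm : m j ≠ 0) :
    (∏ j' : Fin N, ∏ i ∈ Finset.range (m j'), (1 - (X : PowerSeries ℚ) ^ (N * (i + 1))))
      = (∏ j' : Fin N, ∏ i ∈ Finset.range (Function.update m j (m j - 1) j'),
          (1 - (X : PowerSeries ℚ) ^ (N * (i + 1))))
        * (1 - (X : PowerSeries ℚ) ^ (N * m j)) := by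
  rw [← Finset.mul_prod_erase Finset.univ _ (Finset.mem_univ j),
    ← Finset.mul_prod_erase Finset.univ
      (fun j' => ∏ i ∈ Finset.range (Function.update m j (m j - 1) j'),
        (1 - (X : PowerSeries ℚ) ^ (N * (i + 1)))) (Finset.mem_univ j)]
  have hoff : ∀ x ∈ Finset.univ.erase j,
      (∏ i ∈ Finset.range (Function.update m j (m j - 1) x),
        (1 - (X : PowerSeries ℚ) ^ (N * (i + 1))))
      = ∏ i ∈ Finset.range (m x), (1 - (X : PowerSeries ℚ) ^ (N * (i + 1))) := by
    intro x hx
    rw [Function.update_of_ne (Finset.ne_of_mem_erase hx)]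
  rw [Finset.prod_congr rfl hoff, Function.update_self]
  have hr : ∏ i ∈ Finset.range (m j), (1 - (X : PowerSeries ℚ) ^ (N * (i + 1)))
      = (∏ i ∈ Finset.range (m j - 1), (1 - (X : PowerSeries ℚ) ^ (N * (i + 1))))
        * (1 - (X : PowerSeries ℚ) ^ (N * m j)) := by
    conv_lhs => rw [show m j = (m j - 1) + 1 by omega]
    rw [Finset.prod_range_succ, show (m j - 1) + 1 = m j by omega]
  rw [hr]
  ring

lemma rec_step (hN : 0 < N) (m : Fin N → ℕ) (j : Fin N) (hm : m j ≠ 0) :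
    PowerSeries.mk (fun n => (dctN N m n : ℚ))
      = X ^ (N * m j) * PowerSeries.mk (fun n => (dctN N m n : ℚ))
        + X ^ ((j : ℕ) + 1 + N * (m j - 1))
          * PowerSeries.mk (fun n => (dctN N (Function.update m j (m j - 1)) n : ℚ)) := by
  ext n
  rw [map_add, coeff_X_pow_mul', coeff_X_pow_mul', coeff_mk, coeff_mk, coeff_mk,
    dctN_rec hN m j hm n]
  push_cast
  split_ifs <;> simp

end PS

end GFAux

open GFAux in
/-- Generating function: `∑_{n≥0} d_m(n) qⁿ = q^{N·H(m)} / ∏_{j=1}^N (q^N; q^N)_{m_j}`,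
as formal power series, where `(q^N;q^N)_k = ∏_{i=0}^{k-1}(1 - q^N·q^{Ni})`. -/
theorem gen_fun_distinct_parts_congruence (N : ℕ) (hN : 0 < N) (m : Fin N → ℕ) :
    PowerSeries.mk (fun n => (dctN N m n : ℚ)) =
      (PowerSeries.X : PowerSeries ℚ) ^ (NHnat N m) *
        (∏ j : Fin N, ∏ i ∈ Finset.range (m j),
          (1 - (PowerSeries.X : PowerSeries ℚ) ^ (N * (i + 1))))⁻¹ := by
  have key : ∀ (k : ℕ) (m : Fin N → ℕ), (∑ j, m j) = k →
      PowerSeries.mk (fun n => (dctN N m n : ℚ)) =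
        (PowerSeries.X : PowerSeries ℚ) ^ (NHnat N m) *
          (∏ j : Fin N, ∏ i ∈ Finset.range (m j),
            (1 - (PowerSeries.X : PowerSeries ℚ) ^ (N * (i + 1))))⁻¹ := by
    intro k
    induction k using Nat.strong_induction_on with
    | _ k ih =>
      intro m hmk
      by_cases hk : k = 0
      · subst hk
        have hm0 : ∀ j, m j = 0 := fun j =>
          (Finset.sum_eq_zero_iff.mp hmk) j (Finset.mem_univ j)
        have hT : NHnat N m = 0 := by
          unfold NHnat
          apply Finset.sum_eq_zero
          intro j _
          rw [hm0 j]
          simp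
        have hP : (∏ j : Fin N, ∏ i ∈ Finset.range (m j),
            (1 - (PowerSeries.X : PowerSeries ℚ) ^ (N * (i + 1)))) = 1 := by
          apply Finset.prod_eq_one
          intro j _
          rw [hm0 j]
          simp
        rw [hT, hP, pow_zero, one_mul, inv_one]
        ext n
        rw [coeff_mk, dctN_base hN m hm0 n, coeff_one]
        split_ifs <;> simp
      · obtain ⟨j, -, hj⟩ := Finset.exists_ne_zero_of_sum_ne_zero
          (show (∑ j, m j) ≠ 0 by rw [hmk]; exact hk)
        set m' := Function.update m j (m j - 1) with hm'def
        have hsum' : (∑ j', m' j') = k - 1 := by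
          rw [hm'def, Finset.sum_update_of_mem (Finset.mem_univ j)]
          have h2 : (∑ x, m x) = m j + ∑ x ∈ Finset.univ.erase j, m x :=
            (Finset.add_sum_erase _ m (Finset.mem_univ j)).symm
          rw [Finset.sdiff_singleton_eq_erase]
          omega
        have IH := ih (k - 1) (by omega) m' hsum'
        have hrec := rec_step hN m j hj
        have hTb := NHnat_update m j hj
        have hPd := prod_update m j hj
        have hcc' : constantCoeff (R := ℚ) (∏ j' : Fin N, ∏ i ∈ Finset.range (m' j'),
            (1 - (PowerSeries.X : PowerSeries ℚ) ^ (N * (i + 1)))) ≠ 0 := by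
          rw [constCoeff_prod hN m']
          exact one_ne_zero
        have hcc : constantCoeff (R := ℚ) (∏ j' : Fin N, ∏ i ∈ Finset.range (m j'),
            (1 - (PowerSeries.X : PowerSeries ℚ) ^ (N * (i + 1)))) ≠ 0 := by
          rw [constCoeff_prod hN m]
          exact one_ne_zero
        rw [PowerSeries.eq_mul_inv_iff_mul_eq hcc, hPd]
        have h5 : PowerSeries.mk (fun n => (dctN N m n : ℚ))
              * (1 - (PowerSeries.X : PowerSeries ℚ) ^ (N * m j))
            = (PowerSeries.X : PowerSeries ℚ) ^ ((j : ℕ) + 1 + N * (m j - 1))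
              * PowerSeries.mk (fun n => (dctN N m' n : ℚ)) := by
          linear_combination hrec
        calc PowerSeries.mk (fun n => (dctN N m n : ℚ))
              * ((∏ j' : Fin N, ∏ i ∈ Finset.range (m' j'),
                  (1 - (PowerSeries.X : PowerSeries ℚ) ^ (N * (i + 1))))
                * (1 - (PowerSeries.X : PowerSeries ℚ) ^ (N * m j)))
            = (PowerSeries.mk (fun n => (dctN N m n : ℚ))
                * (1 - (PowerSeries.X : PowerSeries ℚ) ^ (N * m j)))
              * (∏ j' : Fin N, ∏ i ∈ Finset.range (m' j'),
                  (1 - (PowerSeries.X : PowerSeries ℚ) ^ (N * (i + 1)))) := by ring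
          _ = (PowerSeries.X : PowerSeries ℚ) ^ ((j : ℕ) + 1 + N * (m j - 1))
              * (PowerSeries.mk (fun n => (dctN N m' n : ℚ))
                * (∏ j' : Fin N, ∏ i ∈ Finset.range (m' j'),
                  (1 - (PowerSeries.X : PowerSeries ℚ) ^ (N * (i + 1))))) := by
              rw [h5]; ring
          _ = (PowerSeries.X : PowerSeries ℚ) ^ ((j : ℕ) + 1 + N * (m j - 1))
              * ((PowerSeries.X : PowerSeries ℚ) ^ (NHnat N m')
                * ((∏ j' : Fin N, ∏ i ∈ Finset.range (m' j'),
                    (1 - (PowerSeries.X : PowerSeries ℚ) ^ (N * (i + 1))))⁻¹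
                  * (∏ j' : Fin N, ∏ i ∈ Finset.range (m' j'),
                    (1 - (PowerSeries.X : PowerSeries ℚ) ^ (N * (i + 1)))))) := by
              rw [IH]; ring
          _ = (PowerSeries.X : PowerSeries ℚ) ^ ((j : ℕ) + 1 + N * (m j - 1))
              * (PowerSeries.X : PowerSeries ℚ) ^ (NHnat N m') := by
              rw [PowerSeries.inv_mul_cancel _ hcc', mul_one]
          _ = (PowerSeries.X : PowerSeries ℚ) ^ (NHnat N m) := by
              rw [hTb, pow_add]; ring
  exact key (∑ j, m j) m rfl
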